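/- Let α, β > 0 and Γ_B, Γ_H, Γ_N > 0, set D = 1 - β²Γ_N/(2α), and assume β²Γ_N/(2α) < 1 and 0 < D² - 4 (β²Γ_H/(2α)) (β²Γ_B/(2α)) < 1. Let (p_k) be any sequence of nonnegative reals with p₁ ≤ β²Γ_B/(2α) and p_k ≤ (β²/(2α))(Γ_H p_{k-1}² + Γ_N p_{k-1} + Γ_B). Then p_k ≤ P∞ for all k, where P∞ = (2α/(β²Γ_H)) (D - sqrt(D² - 4 (β²Γ_H/(2α)) (β²Γ_B/(2α)) ))/2 is the smaller fixed point of x ↦ (β²/(2α))(Γ_H x² + Γ_N x + Γ_B). -/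

import Mathlib

set_option maxHeartbeats 1000000


/-- Under the convergence conditions on `α, β, Γ_B, Γ_H, Γ_N`
(with `D = 1 - β²Γ_N/(2α)`), any nonnegative sequence with
`p₁ ≤ β²Γ_B/(2α)` and `p_k ≤ (β²/(2α))(Γ_H p_{k-1}² + Γ_N p_{k-1} + Γ_B)` is
bounded by the smaller fixed point
`P∞ = (2α/(β²Γ_H)) (D - √(D² - 4(β²Γ_H/(2α))(β²Γ_B/(2α))))/2`. -/
theorem stmt15 (α β ΓB ΓH ΓN : ℝ)
    (hα : 0 < α) (hβ : 0 < β) (hΓB : 0 < ΓB) (hΓH : 0 < ΓH) (hΓN : 0 < ΓN)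
    (hN : β ^ 2 * ΓN / (2 * α) < 1)
    (hd0 : 0 < (1 - β ^ 2 * ΓN / (2 * α)) ^ 2
      - 4 * (β ^ 2 * ΓH / (2 * α)) * (β ^ 2 * ΓB / (2 * α)))
    (hd1 : (1 - β ^ 2 * ΓN / (2 * α)) ^ 2
      - 4 * (β ^ 2 * ΓH / (2 * α)) * (β ^ 2 * ΓB / (2 * α)) < 1)
    (p : ℕ → ℝ) (hpos : ∀ k, 0 ≤ p k)
    (hp1 : p 1 ≤ β ^ 2 * ΓB / (2 * α))
    (hrec : ∀ k, 2 ≤ k →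
      p k ≤ β ^ 2 / (2 * α) * (ΓH * (p (k - 1)) ^ 2 + ΓN * p (k - 1) + ΓB)) :
    ∀ k, 1 ≤ k →
      p k ≤ 2 * α / (β ^ 2 * ΓH) *
        ((1 - β ^ 2 * ΓN / (2 * α))
          - Real.sqrt ((1 - β ^ 2 * ΓN / (2 * α)) ^ 2
              - 4 * (β ^ 2 * ΓH / (2 * α)) * (β ^ 2 * ΓB / (2 * α)))) / 2 := by
  set a : ℝ := β ^ 2 * ΓH / (2 * α) with ha_def
  set b : ℝ := β ^ 2 * ΓN / (2 * α) with hb_def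
  set c : ℝ := β ^ 2 * ΓB / (2 * α) with hc_def
  set D : ℝ := 1 - b with hD_def
  set s : ℝ := Real.sqrt (D ^ 2 - 4 * a * c) with hs_def
  have ha : 0 < a := by positivity
  have hb : 0 < b := by positivity
  have hc : 0 < c := by positivity
  have hs0 : 0 ≤ s := Real.sqrt_nonneg _
  have hs2 : s ^ 2 = D ^ 2 - 4 * a * c := Real.sq_sqrt (le_of_lt hd0)
  set P : ℝ := 2 * α / (β ^ 2 * ΓH) * (D - s) / 2 with hP_def
  have hPa : P = (D - s) / (2 * a) := by
    rw [hP_def, ha_def]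
    field_simp
  have hfix : a * P ^ 2 + b * P + c = P := by
    rw [hPa, hD_def]
    rw [hD_def] at hs2
    have h2a : (2 * a) ≠ 0 := by positivity
    clear_value a b c D s P
    field_simp
    linear_combination hs2
  have hcP : c ≤ P := by nlinarith [sq_nonneg P, mul_nonneg ha.le (sq_nonneg P)]
  have hPpos : 0 < P := lt_of_lt_of_le hc hcP
  intro k hk
  induction k with
  | zero => omega
  | succ n ih =>
    rcases Nat.lt_or_ge n 1 with hn | hn
    · interval_cases n
      exact le_trans hp1 hcP
    · have hpn : p n ≤ P := ih hn
      have h2 : 2 ≤ n + 1 := by omega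
      have := hrec (n + 1) h2
      simp only [Nat.add_sub_cancel] at this
      have hkey : β ^ 2 / (2 * α) * (ΓH * (p n) ^ 2 + ΓN * p n + ΓB)
          = a * (p n) ^ 2 + b * p n + c := by
        rw [ha_def, hb_def, hc_def]; field_simp
      rw [hkey] at this
      have hmono : a * (p n) ^ 2 + b * p n + c ≤ a * P ^ 2 + b * P + c := by
        nlinarith [mul_le_mul hpn hpn (hpos n) hPpos.le, mul_le_mul_of_nonneg_left hpn hb.le,
          mul_le_mul_of_nonneg_left (mul_le_mul hpn hpn (hpos n) hPpos.le) ha.le]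
      linarith [hfix]
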